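/- Barycentric contiguity lemma: let K be a finite simplicial complex and let f: (K\{∅}) → (K\{∅}) be an order-reversing-squared map, i.e., f = φ∘ψ where ψ, φ are order-reversing maps between posets of nonempty simplices, such that σ ⊆ f(σ) for all σ, and whenever σ ≠ f(σ), then f(η) = f(σ) for all nonempty η ⊆ σ. Then the induced simplicial map F on the barycentric subdivision S(K) (sending a flag {η_1 ⊂ ⋯ ⊂ η_s} to {f(η_1) ⊆ ⋯ ⊆ f(η_s)} with repetitions removed) has the property that for every simplex V of S(K), V and F(V) are faces of a common simplex of S(K); consequently |F| is homotopic to the identity on |K|. -/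
import Mathlib


variable {V U : Type} [Fintype V] [DecidableEq V]

/-- A simplicial complex: a family of finite subsets closed under taking subsets. -/
def IsSimplicialComplex (K : Set (Finset V)) : Prop :=
  ∀ σ ∈ K, ∀ τ ⊆ σ, τ ∈ K

/-- The barycentric subdivision `S(K)`: its vertices are the nonempty simplices of `K`
and its simplices are the flags (chains under inclusion) of such. -/
def barycentricSubdivision (K : Set (Finset V)) : Set (Finset (Finset V)) :=
  {F | (∀ s ∈ F, s ∈ K ∧ s ≠ ∅) ∧ ∀ s ∈ F, ∀ t ∈ F, s ⊆ t ∨ t ⊆ s}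

/-- The geometric realization of a simplicial complex `L` on a finite vertex set `W`. -/
abbrev geomReal {W : Type} [Fintype W] (L : Set (Finset W)) : Type :=
  {g : W → ℝ // (∀ v, 0 ≤ g v) ∧ (∑ v, g v) = 1 ∧ ∃ s ∈ L, ∀ v, g v ≠ 0 → v ∈ s}

/-- barycentric contiguity lemma: let `f = φ ∘ ψ` with `ψ`, `φ`
order-reversing, `σ ⊆ f(σ)` for every nonempty simplex `σ` of `K`, and `f(η) = f(σ)`
for all nonempty `η ⊆ σ` whenever `f(σ) ≠ σ`.  Then for every simplex `V` of the
barycentric subdivision `S(K)`, `V` and its image flag are faces of a common simplex of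
`S(K)`; consequently the induced piecewise-linear map `|F|` on `|S(K)|`
(which sends `x` to `w ↦ Σ_{f(v)=w} x_v`) is homotopic to the identity. -/
theorem barycentric_contiguity (K : Set (Finset V)) (hK : IsSimplicialComplex K)
    (f : Finset V → Finset V) (ψ : Finset V → Finset U) (φ : Finset U → Finset V)
    (hψ : ∀ s t : Finset V, s ∈ K → t ∈ K → s.Nonempty → s ⊆ t → ψ t ⊆ ψ s)
    (hφ : ∀ a b : Finset U, a ⊆ b → φ b ⊆ φ a)
    (hfψφ : ∀ s, f s = φ (ψ s))
    (hmem : ∀ s ∈ K, s.Nonempty → f s ∈ K ∧ (f s).Nonempty)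
    (hsub : ∀ s ∈ K, s.Nonempty → s ⊆ f s)
    (hcollapse : ∀ s ∈ K, s.Nonempty → f s ≠ s → ∀ η ⊆ s, η.Nonempty → f η = f s) :
    (∀ F ∈ barycentricSubdivision K, ∃ W ∈ barycentricSubdivision K,
        F ⊆ W ∧ F.image f ⊆ W) ∧
      ∀ h : C(geomReal (barycentricSubdivision K), geomReal (barycentricSubdivision K)),
        (∀ (x : geomReal (barycentricSubdivision K)) (w : Finset V),
          (h x).1 w = ∑ v ∈ Finset.univ.filter (fun v => f v = w), x.1 v) →
        h.Homotopic (ContinuousMap.id _) := by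
  -- monotonicity of f on K
  have fmono : ∀ a b : Finset V, a ∈ K → b ∈ K → a.Nonempty → a ⊆ b → f a ⊆ f b := by
    intro a b haK hbK hane hab
    rw [hfψφ, hfψφ]
    exact hφ _ _ (hψ a b haK hbK hane hab)
  -- comparability of b and f a for a ⊆ b
  have comp : ∀ a b : Finset V, a ∈ K → b ∈ K → a.Nonempty → b.Nonempty → a ⊆ b →
      f a ⊆ b ∨ b ⊆ f a := by
    intro a b haK hbK hane hbne hab
    by_cases hb : f b = b
    · refine Or.inl ?_
      rw [← hb]
      exact fmono a b haK hbK hane hab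
    · right
      rw [hcollapse b hbK hbne hb a hab hane]
      exact hsub b hbK hbne
  have part1 : ∀ F ∈ barycentricSubdivision K, ∃ W ∈ barycentricSubdivision K,
      F ⊆ W ∧ F.image f ⊆ W := by
    intro F hF
    obtain ⟨hFK, hchain⟩ := hF
    have hKm : ∀ s ∈ F, s ∈ K := fun s hs => (hFK s hs).1
    have hne : ∀ s ∈ F, s.Nonempty := fun s hs =>
      Finset.nonempty_iff_ne_empty.2 (hFK s hs).2
    refine ⟨F ∪ F.image f, ⟨?_, ?_⟩, Finset.subset_union_left, Finset.subset_union_right⟩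
    · intro s hs
      rcases Finset.mem_union.1 hs with hs | hs
      · exact hFK s hs
      · obtain ⟨a, ha, rfl⟩ := Finset.mem_image.1 hs
        obtain ⟨h1, h2⟩ := hmem a (hKm a ha) (hne a ha)
        exact ⟨h1, Finset.nonempty_iff_ne_empty.1 h2⟩
    · -- chain condition
      have hc1 : ∀ s ∈ F, ∀ b ∈ F, s ⊆ f b ∨ f b ⊆ s := by
        intro s hs b hb
        rcases hchain s hs b hb with hsb | hbs
        · exact Or.inl (hsb.trans (hsub b (hKm b hb) (hne b hb)))
        · exact (comp b s (hKm b hb) (hKm s hs) (hne b hb) (hne s hs) hbs).symm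
      intro s hs t ht
      rcases Finset.mem_union.1 hs with hs | hs <;> rcases Finset.mem_union.1 ht with ht | ht
      · exact hchain s hs t ht
      · obtain ⟨b, hb, rfl⟩ := Finset.mem_image.1 ht
        exact hc1 s hs b hb
      · obtain ⟨a, ha, rfl⟩ := Finset.mem_image.1 hs
        exact (hc1 t ht a ha).symm
      · obtain ⟨a, ha, rfl⟩ := Finset.mem_image.1 hs
        obtain ⟨b, hb, rfl⟩ := Finset.mem_image.1 ht
        rcases hchain a ha b hb with hab | hba
        · exact Or.inl (fmono a b (hKm a ha) (hKm b hb) (hne a ha) hab)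
        · exact Or.inr (fmono b a (hKm b hb) (hKm a ha) (hne b hb) hba)
  refine ⟨part1, ?_⟩
  intro h hform
  -- the linear homotopy
  have hprop : ∀ (t : unitInterval) (x : geomReal (barycentricSubdivision K)),
      (∀ w, 0 ≤ (1 - (t : ℝ)) * (h x).1 w + (t : ℝ) * x.1 w) ∧
      (∑ w, ((1 - (t : ℝ)) * (h x).1 w + (t : ℝ) * x.1 w)) = 1 ∧
      ∃ s ∈ barycentricSubdivision K,
        ∀ w, (1 - (t : ℝ)) * (h x).1 w + (t : ℝ) * x.1 w ≠ 0 → w ∈ s := by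
    intro t x
    refine ⟨fun w => add_nonneg (mul_nonneg (by linarith [t.2.2]) ((h x).2.1 w))
      (mul_nonneg t.2.1 (x.2.1 w)), ?_, ?_⟩
    · rw [Finset.sum_add_distrib, ← Finset.mul_sum, ← Finset.mul_sum,
        (h x).2.2.1, x.2.2.1]
      ring
    · obtain ⟨F, hF, hsupp⟩ := x.2.2.2
      obtain ⟨W, hW, hFW, hfFW⟩ := part1 F hF
      refine ⟨W, hW, fun w hw => ?_⟩
      have : (h x).1 w ≠ 0 ∨ x.1 w ≠ 0 := by
        by_contra hcon
        push_neg at hcon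
        rw [hcon.1, hcon.2] at hw
        simp at hw
      rcases this with hxw | hxw
      · rw [hform x w] at hxw
        obtain ⟨v, hv, hxv⟩ := Finset.exists_ne_zero_of_sum_ne_zero hxw
        have hfv : f v = w := (Finset.mem_filter.1 hv).2
        exact hfFW (Finset.mem_image.2 ⟨v, hsupp v hxv, hfv⟩)
      · exact hFW (hsupp w hxw)
  have hcont : Continuous (fun p : unitInterval × geomReal (barycentricSubdivision K) =>
      (⟨fun w => (1 - (p.1 : ℝ)) * (h p.2).1 w + (p.1 : ℝ) * p.2.1 w,
        hprop p.1 p.2⟩ : geomReal (barycentricSubdivision K))) := by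
    refine Continuous.subtype_mk ?_ _
    refine continuous_pi fun w => ?_
    have h1 : Continuous fun p : unitInterval × geomReal (barycentricSubdivision K) =>
        (p.1 : ℝ) := continuous_subtype_val.comp continuous_fst
    have h2 : Continuous fun p : unitInterval × geomReal (barycentricSubdivision K) =>
        (h p.2).1 w :=
      (continuous_apply w).comp (continuous_subtype_val.comp (h.continuous.comp continuous_snd))
    have h3 : Continuous fun p : unitInterval × geomReal (barycentricSubdivision K) =>
        p.2.1 w :=
      (continuous_apply w).comp (continuous_subtype_val.comp continuous_snd)
    exact ((continuous_const.sub h1).mul h2).add (h1.mul h3)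
  refine ⟨⟨⟨fun p => ⟨fun w => (1 - (p.1 : ℝ)) * (h p.2).1 w + (p.1 : ℝ) * p.2.1 w,
    hprop p.1 p.2⟩, hcont⟩, ?_, ?_⟩⟩
  · intro x
    ext w
    simp
  · intro x
    ext w
    simp
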